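/- If there exists a surjection from S × η onto X for some ordinal η, then there exists a minitial partial surjection from S × η' onto X: η' is least among ordinals such that some subset of S × η' surjects onto X, the domain restricted to each {s} × η' is an initial segment {s} × η_s, and the restriction to each {s} × η_s is injective. -/

import Mathlib

universe u

/-- The ordinal corresponding to an element of `o.ToType`. -/
noncomputable def ordIdx {o : Ordinal.{u}} (β : o.ToType) : Ordinal.{u} :=
  @Ordinal.typein o.ToType (· < ·) isWellOrder_lt β

theorem ordIdx_enumIsoToType {o : Ordinal.{u}} (p : Set.Iio o) :
    ordIdx (Ordinal.ToType.mk (o := o) p) = p.1 := by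
  have := congrArg Subtype.val ((Ordinal.ToType.mk (o := o)).symm_apply_apply p)
  change ordIdx (Ordinal.ToType.mk (o := o) p) = p.1 at this
  exact this

theorem enumIsoToType_ordIdx {o : Ordinal.{u}} (β : o.ToType) (h : ordIdx β < o) :
    Ordinal.ToType.mk (o := o) ⟨ordIdx β, h⟩ = β := by
  have : (Ordinal.ToType.mk (o := o)).symm β = ⟨ordIdx β, h⟩ := rfl
  rw [← this, OrderIso.apply_symm_apply]

/-- if some `S × η` surjects onto `X` (for an ordinal `η`), then there is a
minitial partial surjection `f : S × η' ⇀ X`: `η'` is least among ordinals such that a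
subset of `S × η'` surjects onto `X`, the domain of `f` meets each `{s} × η'` in an
initial segment `{s} × η_s` with `η_s ≤ η'`, and `f` is injective on each `{s} × η_s`. -/
theorem minitial_partial_surjection_exists (S X : Type u)
    (h : ∃ η : Ordinal.{u}, ∃ (A : Set (S × η.ToType)) (f : A → X), Function.Surjective f) :
    ∃ (η' : Ordinal.{u}) (D : Set (S × η'.ToType)) (f : D → X), Function.Surjective f ∧
      (∀ ξ : Ordinal.{u},
        (∃ (A : Set (S × ξ.ToType)) (g : A → X), Function.Surjective g) → η' ≤ ξ) ∧
      (∀ s : S, ∃ ηs : Ordinal.{u}, ηs ≤ η' ∧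
        ∀ β : η'.ToType, (s, β) ∈ D ↔ ordIdx β < ηs) ∧
      (∀ x y : D, (x : S × η'.ToType).1 = (y : S × η'.ToType).1 → f x = f y → x = y) := by
  classical
  set P : Set Ordinal.{u} :=
    {ξ | ∃ (A : Set (S × ξ.ToType)) (g : A → X), Function.Surjective g} with hP
  have hne : P.Nonempty := h
  set η' : Ordinal.{u} := sInf P with hη'
  have hη'P : η' ∈ P := csInf_mem hne
  have hmin : ∀ ξ ∈ P, η' ≤ ξ := fun ξ hξ => csInf_le' hξ
  obtain ⟨A, g, hg⟩ := hη'P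
  -- values occurring in column `s`
  set V : S → Set X := fun s => {x | ∃ β, ∃ (hβ : (s, β) ∈ A), g ⟨(s, β), hβ⟩ = x} with hV
  -- column lengths
  set ηs : S → Ordinal.{u} := fun s => (Cardinal.mk (V s)).ord with hηs
  have hle : ∀ s, ηs s ≤ η' := by
    intro s
    have hsurj : Function.Surjective
        (fun b : {β : η'.ToType // (s, β) ∈ A} => (⟨g ⟨(s, b.1), b.2⟩, b.1, b.2, rfl⟩ : V s)) := by
      rintro ⟨x, β, hβ, hx⟩
      exact ⟨⟨β, hβ⟩, Subtype.ext hx⟩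
    have h1 : Cardinal.mk (V s) ≤ Cardinal.mk {β : η'.ToType // (s, β) ∈ A} :=
      Cardinal.mk_le_of_surjective hsurj
    have h2 : Cardinal.mk {β : η'.ToType // (s, β) ∈ A} ≤ Cardinal.mk η'.ToType :=
      Cardinal.mk_subtype_le _
    rw [Cardinal.mk_toType] at h2
    exact Cardinal.ord_le.2 (h1.trans h2)
  -- equivalence between the initial segment of length `ηs s` and `V s`
  have hes : ∀ s : S, Nonempty ({β : η'.ToType // ordIdx β < ηs s} ≃ V s) := by
    intro s
    have e1 : {β : η'.ToType // ordIdx β < ηs s} ≃ Set.Iio (ηs s) :=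
      { toFun := fun b => ⟨ordIdx b.1, b.2⟩
        invFun := fun p =>
          ⟨Ordinal.ToType.mk (o := η') ⟨p.1, lt_of_lt_of_le p.2 (hle s)⟩, by
            rw [ordIdx_enumIsoToType]; exact p.2⟩
        left_inv := by
          rintro ⟨β, hβ⟩
          exact Subtype.ext (enumIsoToType_ordIdx β _)
        right_inv := by
          rintro ⟨p, hp⟩
          exact Subtype.ext (ordIdx_enumIsoToType _) }
    have e2 : Set.Iio (ηs s) ≃ (ηs s).ToType := (Ordinal.ToType.mk).toEquiv
    have hcard : Cardinal.mk (ηs s).ToType = Cardinal.mk (V s) := by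
      rw [Cardinal.mk_toType, hηs, Cardinal.card_ord]
    obtain ⟨e3⟩ := Cardinal.eq.1 hcard
    exact ⟨(e1.trans e2).trans e3⟩
  have es := fun s => Classical.choice (hes s)
  refine ⟨η', {p : S × η'.ToType | ordIdx p.2 < ηs p.1},
    fun d => ((es d.1.1) ⟨d.1.2, d.2⟩ : X), ?_, fun ξ hξ => hmin ξ hξ,
    fun s => ⟨ηs s, hle s, fun β => Iff.rfl⟩, ?_⟩
  · -- surjectivity
    intro x
    obtain ⟨⟨⟨s, β⟩, hβ⟩, hx⟩ := hg x
    have hxV : x ∈ V s := ⟨β, hβ, hx⟩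
    obtain ⟨⟨β', hβ'⟩, hb⟩ := (es s).surjective ⟨x, hxV⟩
    exact ⟨⟨(s, β'), hβ'⟩, congrArg Subtype.val hb⟩
  · -- column injectivity
    rintro ⟨⟨s1, β1⟩, h1⟩ ⟨⟨s2, β2⟩, h2⟩ hfst hf
    dsimp at hfst
    subst hfst
    have := (es s1).injective (Subtype.ext hf)
    have hβ : β1 = β2 := congrArg Subtype.val this
    subst hβ
    rfl
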